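/- arXiv:1104.5195 — 2 statements merged into one kernel-verified Lean document; each statement's English description precedes it below -/
import Mathlib

section
/- Let T be a directed tree such that the set Chi(u) of children of u is countably infinite for every u ∈ V, and let λ = {λ_v}_{v∈V°} be a family of positive real numbers such that the weighted shift S_λ is densely defined and (Σ_{w∈Chi(v)} λ_w²) · λ_v² = 1 for every v ∈ V°. Then D(S_λ*) ⊄ D(S_λ). -/
open scoped ENNReal NNReal Classical

noncomputable section

/-- A directed tree: a directed graph with nonempty vertex set in which each vertex has
at most one parent, there are no circuits, and the underlying undirected graph is
connected and has no cycles (i.e. is a tree). -/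
structure DirectedTree (V : Type) where
  edge : V → V → Prop
  nonempty : Nonempty V
  antisymm : ∀ u v : V, edge u v → ¬ edge v u
  parent_unique : ∀ u v w : V, edge u w → edge v w → u = v
  isTree : (SimpleGraph.fromRel edge).IsTree

namespace DirectedTree

variable {V : Type} (T : DirectedTree V)

/-- The set of children of a vertex. -/
def chi (u : V) : Set V := {v | T.edge u v}

/-- `v` has a parent. -/
def HasParent (v : V) : Prop := ∃ u, T.edge u v

/-- `V⁰`: the set of non-root vertices, i.e. the vertices possessing a parent. -/
def Vcirc : Set V := {v | T.HasParent v}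

/-- The tree is leafless if every vertex has a child. -/
def Leafless : Prop := ∀ u : V, (T.chi u).Nonempty

/-- The parent of a vertex (junk value if the vertex is a root). -/
def par (v : V) : V := if h : T.HasParent v then h.choose else T.nonempty.some

/-- The set of descendants of a vertex. -/
def desc (u : V) : Set V := {w | Relation.ReflTransGen T.edge u w}

/-- The formal weighted shift map `Λ_T` acting on all complex functions on `V`. -/
def Lam (lam : V → ℂ) (f : V → ℂ) : V → ℂ :=
  fun v => if T.HasParent v then lam v * f (T.par v) else 0

/-- The domain of the weighted shift `S_λ`. -/
def domain (lam : V → ℂ) : Set (lp (fun _ : V => ℂ) 2) :=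
  {f | Memℓp (T.Lam lam ⇑f) 2}

/-- The weighted shift `S_λ` (extended by `0` outside its domain). -/
def shift (lam : V → ℂ) (f : lp (fun _ : V => ℂ) 2) : lp (fun _ : V => ℂ) 2 :=
  if h : f ∈ T.domain lam then (⟨T.Lam lam ⇑f, h⟩ : lp (fun _ : V => ℂ) 2) else 0

/-- The domain of `S_λ²`. -/
def squareDomain (lam : V → ℂ) : Set (lp (fun _ : V => ℂ) 2) :=
  {f | f ∈ T.domain lam ∧ T.shift lam f ∈ T.domain lam}

/-- The domain of the adjoint `S_λ*`. -/
def adjDomain (lam : V → ℂ) : Set (lp (fun _ : V => ℂ) 2) :=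
  {g | ∃ h : lp (fun _ : V => ℂ) 2,
    ∀ f ∈ T.domain lam, (inner ℂ (T.shift lam f) g : ℂ) = inner ℂ f h}

/-- `S_λ` is hyponormal: it is densely defined, `D(S_λ) ⊆ D(S_λ*)` and
`‖S_λ* f‖ ≤ ‖S_λ f‖` for every `f ∈ D(S_λ)` (the adjoint value at `f` being any vector
`h` satisfying `⟪S_λ g, f⟫ = ⟪g, h⟫` for all `g ∈ D(S_λ)`; it is unique by density). -/
def IsHyponormal (lam : V → ℂ) : Prop :=
  Dense (T.domain lam) ∧ T.domain lam ⊆ T.adjDomain lam ∧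
    ∀ f ∈ T.domain lam, ∀ h : lp (fun _ : V => ℂ) 2,
      (∀ g ∈ T.domain lam, (inner ℂ (T.shift lam g) f : ℂ) = inner ℂ g h) →
        ‖h‖ ≤ ‖T.shift lam f‖

/-- `ζ_u = (Σ_{v ∈ Chi(u)} |λ_v|²)^{1/2} ∈ [0,∞]`. -/
def zeta (lam : V → ℂ) (u : V) : ℝ≥0∞ :=
  (∑' v : T.chi u, ((‖lam (v : V)‖₊ : ℝ≥0∞)) ^ 2) ^ (1/2 : ℝ)

end DirectedTree


theorem aux_mem {α : Type} (f : α → ℂ) :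
    Memℓp f 2 ↔ (∑' v, ((‖f v‖₊ : ℝ≥0∞))^2) ≠ ⊤ := by
  rw [memℓp_gen_iff (p := 2) (by norm_num)]
  have h1 : (fun v => ‖f v‖ ^ (2:ℝ≥0∞).toReal) = fun v => ((‖f v‖₊ ^ 2 : ℝ≥0) : ℝ) := by
    funext v
    rw [ENNReal.toReal_ofNat]
    push_cast [← Real.rpow_natCast]
    norm_num
  rw [h1, NNReal.summable_coe, ← ENNReal.tsum_coe_ne_top_iff_summable]
  push_cast
  rfl

theorem aux_par {V : Type} (T : DirectedTree V) {u v : V} (huv : T.edge u v) : T.par v = u := by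
  have hp : T.HasParent v := ⟨u, huv⟩
  rw [DirectedTree.par, dif_pos hp]
  exact T.parent_unique _ _ _ hp.choose_spec huv

/-- Remark 4.3: if every vertex has countably infinitely many children and
`λ = {λ_v}_{v∈V⁰}` is a family of positive reals with `S_λ` densely defined and
`(Σ_{w∈Chi(v)} λ_w²) λ_v² = 1` for all `v ∈ V⁰`, then `D(S_λ*) ⊄ D(S_λ)`. -/
theorem stmt18 {V : Type} (T : DirectedTree V)
    (h : ∀ u : V, (T.chi u).Countable ∧ (T.chi u).Infinite)
    (lam : V → ℂ) (hpos : ∀ v ∈ T.Vcirc, ∃ r : ℝ, 0 < r ∧ lam v = (r : ℂ))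
    (hdense : Dense (T.domain lam))
    (heq : ∀ v ∈ T.Vcirc,
      (∑' w : T.chi v, (‖lam (w:V)‖₊ : ℝ≥0∞) ^ 2) * (‖lam v‖₊ : ℝ≥0∞) ^ 2 = 1) :
    ¬ (T.adjDomain lam ⊆ T.domain lam) := by
  classical
  obtain ⟨rt⟩ := T.nonempty
  obtain ⟨u0, hu0r⟩ := (h rt).2.nonempty
  have hu0 : u0 ∈ T.Vcirc := ⟨rt, hu0r⟩
  -- positivity facts
  have hne : ∀ v ∈ T.Vcirc, (‖lam v‖₊ : ℝ≥0∞) ^ 2 ≠ 0 := by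
    intro v hv
    obtain ⟨r, hr, hl⟩ := hpos v hv
    simp [hl, pow_eq_zero_iff, hr.ne']
  -- the sum over children of u0 is finite
  have hS : (∑' w : T.chi u0, (‖lam (w:V)‖₊ : ℝ≥0∞) ^ 2) ≠ ⊤ := by
    intro htop
    have := heq u0 hu0
    rw [htop, ENNReal.top_mul (hne u0 hu0)] at this
    exact (ENNReal.top_ne_one) this
  -- the candidate function
  set gf : V → ℂ := fun v => if v ∈ T.chi u0 then lam v else 0 with hgf
  have hgmem : Memℓp gf 2 := by
    rw [aux_mem]
    have hsupp : Function.support (fun v => ((‖gf v‖₊ : ℝ≥0∞))^2) ⊆ T.chi u0 := by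
      intro v hv
      by_contra hvc
      simp [hgf, hvc] at hv
    rw [← tsum_subtype_eq_of_support_subset hsupp]
    have : ∀ w : T.chi u0, ((‖gf (w:V)‖₊ : ℝ≥0∞))^2 = (‖lam (w:V)‖₊ : ℝ≥0∞) ^ 2 := by
      intro w; simp [hgf, w.2]
    rw [tsum_congr this]
    exact hS
  set g : lp (fun _ : V => ℂ) 2 := ⟨gf, hgmem⟩ with hg
  have hgcoe : ∀ v, g v = gf v := fun v => rfl
  -- g is in the adjoint domain
  set c : ℂ := ∑' w : T.chi u0, (starRingEnd ℂ) (lam (w:V)) * lam (w:V) with hc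
  have hadj : g ∈ T.adjDomain lam := by
    refine ⟨lp.single 2 u0 c, ?_⟩
    intro f hf
    have hscoe : ∀ v, (T.shift lam f) v = T.Lam lam (⇑f) v := by
      intro v
      rw [DirectedTree.shift, dif_pos hf]
    rw [lp.inner_eq_tsum, lp.inner_eq_tsum]
    simp only [RCLike.inner_apply', hscoe, hgcoe]
    have hsupp : Function.support (fun v => (starRingEnd ℂ) (T.Lam lam (⇑f) v) * gf v)
        ⊆ T.chi u0 := by
      intro v hv
      by_contra hvc
      simp [hgf, hvc] at hv
    rw [← tsum_subtype_eq_of_support_subset hsupp]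
    have h2 : ∀ w : T.chi u0, (starRingEnd ℂ) (T.Lam lam (⇑f) (w:V)) * gf (w:V)
        = (starRingEnd ℂ) (f u0) * ((starRingEnd ℂ) (lam (w:V)) * lam (w:V)) := by
      intro w
      have hp : T.HasParent (w:V) := ⟨u0, w.2⟩
      rw [DirectedTree.Lam]
      simp only [if_pos hp, aux_par T w.2, hgf, if_pos w.2]
      rw [map_mul]
      ring
    rw [tsum_congr h2, tsum_mul_left]
    have h3 : ∀ v, (starRingEnd ℂ) (f v) * (lp.single (E := fun _ : V => ℂ) 2 u0 c) v
        = if v = u0 then (starRingEnd ℂ) (f u0) * c else 0 := by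
      intro v
      rcases eq_or_ne v u0 with rfl | hv
      · simp [lp.single_apply_self]
      · simp [lp.single_apply_ne _ _ _ hv, hv]
    rw [tsum_congr h3, tsum_ite_eq]
  -- g is not in the domain
  have hnd : g ∉ T.domain lam := by
    intro hd
    have hd' : Memℓp (T.Lam lam gf) 2 := hd
    rw [aux_mem] at hd'
    apply hd'
    rw [← top_le_iff]
    have hinj : Function.Injective
        (fun x : (Σ w : T.chi u0, T.chi (w:V)) => (x.2 : V)) := by
      rintro ⟨⟨w1, hw1⟩, ⟨v1, hv1⟩⟩ ⟨⟨w2, hw2⟩, ⟨v2, hv2⟩⟩ hvv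
      simp only at hvv
      subst hvv
      have : w1 = w2 := T.parent_unique _ _ _ hv1 hv2
      subst this
      rfl
    refine le_trans ?_ (ENNReal.tsum_comp_le_tsum_of_injective hinj
      (fun v => ((‖T.Lam lam gf v‖₊ : ℝ≥0∞))^2))
    rw [ENNReal.tsum_sigma']
    have h4 : ∀ (w : T.chi u0) (v : T.chi (w:V)),
        ((‖T.Lam lam gf (v:V)‖₊ : ℝ≥0∞))^2
          = (‖lam (v:V)‖₊ : ℝ≥0∞) ^ 2 * (‖lam (w:V)‖₊ : ℝ≥0∞) ^ 2 := by
      intro w v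
      have hp : T.HasParent (v:V) := ⟨(w:V), v.2⟩
      rw [DirectedTree.Lam]
      simp only [if_pos hp, aux_par T v.2, hgf, if_pos w.2]
      rw [nnnorm_mul]
      push_cast
      ring
    calc (⊤ : ℝ≥0∞) = ∑' _ : T.chi u0, (1 : ℝ≥0∞) := by
          have : Infinite (T.chi u0) := (h u0).2.to_subtype
          exact (ENNReal.tsum_const_eq_top_of_ne_zero one_ne_zero).symm
      _ ≤ ∑' (w : T.chi u0), ∑' (v : T.chi (w:V)), ((‖T.Lam lam gf (v:V)‖₊ : ℝ≥0∞))^2 := by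
          refine ENNReal.tsum_le_tsum fun w => ?_
          rw [tsum_congr (h4 w), ENNReal.tsum_mul_right]
          rw [heq (w:V) ⟨u0, w.2⟩]
  intro hsub
  exact hnd (hsub hadj)
end
end

section
/- Let T be a directed tree such that the set Chi(u) of children of u is countably infinite for every u ∈ V, let λ = {λ_v}_{v∈V°} be a family of nonzero complex numbers such that the weighted shift S_λ is densely defined and D(S_λ²) = {0}, and fix v₀ ∈ V°. Define λ̃ = {λ̃_v}_{v∈V°} by λ̃_v = λ_v for v ≠ v₀ and λ̃_{v₀} = (1 + ‖S_λ e_{v₀}‖²)^{1/2}. Then the weighted shift S_λ̃ is densely defined, D(S_λ̃) = D(S_λ), D(S_λ̃*) = D(S_λ*), S_λ̃ is not hyponormal, and D(S_λ̃²) = {0}. -/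
open scoped ENNReal NNReal Classical

noncomputable section

namespace Stmt19Aux

open DirectedTree

variable {V : Type} (T : DirectedTree V)

lemma memℓp_ite (v₀ : V) (c : ℂ) :
    Memℓp (fun v : V => if v = v₀ then c else 0) 2 := by
  apply memℓp_gen
  apply summable_of_ne_finset_zero (s := {v₀})
  intro b hb
  simp only [Finset.mem_singleton] at hb
  simp [if_neg hb, Real.zero_rpow]

lemma memℓp_mono {f g : V → ℂ} (hg : Memℓp g 2) (hle : ∀ v, ‖f v‖ ≤ ‖g v‖) :
    Memℓp f 2 :=
  memℓp_gen (Summable.of_nonneg_of_le (fun v => Real.rpow_nonneg (norm_nonneg _) _)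
    (fun v => Real.rpow_le_rpow (norm_nonneg _) (hle v) ENNReal.toReal_nonneg)
    (hg.summable (by norm_num)))

lemma edge_par {v : V} (h : T.HasParent v) : T.edge (T.par v) v := by
  rw [DirectedTree.par, dif_pos h]; exact h.choose_spec

lemma lam_eq_add {lam lamT : V → ℂ} {v₀ : V} (hv₀ : T.HasParent v₀)
    (he : ∀ v, v ≠ v₀ → lamT v = lam v) (f : V → ℂ) :
    T.Lam lamT f = fun v => T.Lam lam f v +
      (if v = v₀ then (lamT v₀ - lam v₀) * f (T.par v₀) else 0) := by
  funext v
  by_cases hvv : v = v₀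
  · subst hvv
    have h1 : T.Lam lamT f v = lamT v * f (T.par v) := if_pos hv₀
    have h2 : T.Lam lam f v = lam v * f (T.par v) := if_pos hv₀
    rw [h1, h2, if_pos rfl]
    ring
  · simp [DirectedTree.Lam, he v hvv, if_neg hvv]

lemma mem_domain_iff {lam : V → ℂ} {f : lp (fun _ : V => ℂ) 2} :
    f ∈ T.domain lam ↔ Memℓp (T.Lam lam ⇑f) 2 := Iff.rfl

lemma coe_shift {lam : V → ℂ} {f : lp (fun _ : V => ℂ) 2} (hf : f ∈ T.domain lam) :
    ⇑(T.shift lam f) = T.Lam lam ⇑f := by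
  rw [DirectedTree.shift, dif_pos hf]

lemma domain_subset {lam lamT : V → ℂ} {v₀ : V} (hv₀ : T.HasParent v₀)
    (he : ∀ v, v ≠ v₀ → lamT v = lam v) : T.domain lam ⊆ T.domain lamT := by
  intro f hf
  rw [mem_domain_iff, lam_eq_add T hv₀ he ⇑f]
  exact hf.add (memℓp_ite v₀ _)

lemma domain_eq {lam lamT : V → ℂ} {v₀ : V} (hv₀ : T.HasParent v₀)
    (he : ∀ v, v ≠ v₀ → lamT v = lam v) : T.domain lamT = T.domain lam :=
  le_antisymm (domain_subset T hv₀ (fun v hv => (he v hv).symm))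
    (domain_subset T hv₀ he)

lemma shift_eq_add {lam lamT : V → ℂ} {v₀ : V} (hv₀ : T.HasParent v₀)
    (he : ∀ v, v ≠ v₀ → lamT v = lam v) {f : lp (fun _ : V => ℂ) 2}
    (hf : f ∈ T.domain lam) :
    T.shift lamT f = T.shift lam f +
      lp.single 2 v₀ ((lamT v₀ - lam v₀) * f (T.par v₀)) := by
  have hfT : f ∈ T.domain lamT := domain_subset T hv₀ he hf
  apply lp.ext
  funext v
  rw [lp.coeFn_add, Pi.add_apply, coe_shift T hfT, coe_shift T hf,
    lam_eq_add T hv₀ he ⇑f]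
  by_cases hvv : v = v₀
  · subst hvv; simp [lp.single_apply_self]
  · simp [lp.single_apply_ne _ _ _ hvv, if_neg hvv, Pi.single_apply, hvv]

lemma single_mem_domain {lam : V → ℂ} (hdense : Dense (T.domain lam)) (u : V) :
    (lp.single 2 u (1 : ℂ) : lp (fun _ : V => ℂ) 2) ∈ T.domain lam := by
  obtain ⟨f, hf, hfu⟩ : ∃ f ∈ T.domain lam, (f : V → ℂ) u ≠ 0 := by
    obtain ⟨f, hfd, hdist⟩ := Metric.mem_closure_iff.1
      (hdense (lp.single 2 u (1 : ℂ))) 1 one_pos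
    refine ⟨f, hfd, fun h0 => ?_⟩
    have h1 := lp.norm_apply_le_norm (p := 2) (by norm_num)
      ((lp.single 2 u (1 : ℂ) : lp (fun _ : V => ℂ) 2) - f) u
    rw [lp.coeFn_sub, Pi.sub_apply, h0, lp.single_apply_self, sub_zero] at h1
    simp only [norm_one] at h1
    rw [dist_eq_norm] at hdist
    linarith
  rw [mem_domain_iff]
  have hmem : Memℓp (((f : V → ℂ) u)⁻¹ • T.Lam lam ⇑f) 2 := hf.const_smul _
  refine memℓp_mono hmem (fun v => ?_)
  by_cases hP : T.HasParent v
  · by_cases hp : T.par v = u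
    · have hkey : T.Lam lam (⇑(lp.single 2 u (1 : ℂ) : lp (fun _ : V => ℂ) 2)) v
          = ((f : V → ℂ) u)⁻¹ * T.Lam lam ⇑f v := by
        simp only [DirectedTree.Lam, if_pos hP, hp, lp.single_apply_self]
        field_simp
      rw [hkey]
      simp [norm_mul]
    · have hkey : T.Lam lam (⇑(lp.single 2 u (1 : ℂ) : lp (fun _ : V => ℂ) 2)) v
          = 0 := by
        simp [DirectedTree.Lam, if_pos hP, lp.single_apply_ne _ _ _ hp, Pi.single_apply, hp]
      rw [hkey, norm_zero]
      exact norm_nonneg _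
  · have hkey : T.Lam lam (⇑(lp.single 2 u (1 : ℂ) : lp (fun _ : V => ℂ) 2)) v
        = 0 := by
      simp [DirectedTree.Lam, if_neg hP]
    rw [hkey, norm_zero]
    exact norm_nonneg _

lemma adj_subset {lam lamT : V → ℂ} {v₀ : V} (hv₀ : T.HasParent v₀)
    (he : ∀ v, v ≠ v₀ → lamT v = lam v) :
    T.adjDomain lam ⊆ T.adjDomain lamT := by
  rintro g ⟨h, hh⟩
  refine ⟨h + lp.single 2 (T.par v₀)
      ((starRingEnd ℂ) (lamT v₀ - lam v₀) * (g : V → ℂ) v₀), ?_⟩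
  intro f hf
  have hf' : f ∈ T.domain lam := (domain_eq T hv₀ he) ▸ hf
  rw [shift_eq_add T hv₀ he hf', inner_add_left, inner_add_right, hh f hf',
    lp.inner_single_left, lp.inner_single_right]
  simp only [RCLike.inner_apply, map_mul, starRingEnd_self_apply]
  ring_nf

lemma domain_sub {lam : V → ℂ} {f g : lp (fun _ : V => ℂ) 2}
    (hf : f ∈ T.domain lam) (hg : g ∈ T.domain lam) : f - g ∈ T.domain lam := by
  rw [mem_domain_iff]
  have : T.Lam lam ⇑(f - g) = T.Lam lam ⇑f - T.Lam lam ⇑g := by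
    funext v
    simp only [DirectedTree.Lam, lp.coeFn_sub, Pi.sub_apply]
    split_ifs <;> ring
  rw [this]
  exact hf.sub hg

lemma domain_smul {lam : V → ℂ} (c : ℂ) {f : lp (fun _ : V => ℂ) 2}
    (hf : f ∈ T.domain lam) : c • f ∈ T.domain lam := by
  rw [mem_domain_iff]
  have : T.Lam lam ⇑(c • f) = c • T.Lam lam ⇑f := by
    funext v
    simp only [DirectedTree.Lam, lp.coeFn_smul, Pi.smul_apply, smul_eq_mul]
    split_ifs <;> ring
  rw [this]
  exact hf.const_smul c

lemma zero_mem_domain (lam : V → ℂ) : (0 : lp (fun _ : V => ℂ) 2) ∈ T.domain lam := by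
  rw [mem_domain_iff]
  have : T.Lam lam ⇑(0 : lp (fun _ : V => ℂ) 2) = 0 := by
    funext v
    simp [DirectedTree.Lam, lp.coeFn_zero]
  rw [this]
  exact zero_memℓp

lemma shift_zero (lam : V → ℂ) : T.shift lam 0 = 0 := by
  apply lp.ext
  rw [coe_shift T (zero_mem_domain T lam)]
  funext v
  simp [DirectedTree.Lam, lp.coeFn_zero]

end Stmt19Aux

open Stmt19Aux in
/-- Remark 4.4: modifying one weight of a densely defined `S_λ` with trivial square
domain as indicated yields a non-hyponormal, densely defined weighted shift `S_λ̃`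
with `D(S_λ̃) = D(S_λ)`, `D(S_λ̃*) = D(S_λ*)` and `D(S_λ̃²) = {0}`. -/
theorem stmt19 {V : Type} (T : DirectedTree V)
    (h : ∀ u : V, (T.chi u).Countable ∧ (T.chi u).Infinite)
    (lam : V → ℂ) (hnz : ∀ v ∈ T.Vcirc, lam v ≠ 0)
    (hdense : Dense (T.domain lam))
    (hsq : T.squareDomain lam = ({0} : Set (lp (fun _ : V => ℂ) 2)))
    (v₀ : V) (hv₀ : v₀ ∈ T.Vcirc)
    (lamT : V → ℂ)
    (hlamT : ∀ v : V, lamT v =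
      if v = v₀ then
        ((Real.sqrt (1 + ‖T.shift lam (lp.single 2 v₀ (1:ℂ))‖ ^ 2) : ℝ) : ℂ)
      else lam v) :
    Dense (T.domain lamT) ∧ T.domain lamT = T.domain lam ∧
      T.adjDomain lamT = T.adjDomain lam ∧ ¬ T.IsHyponormal lamT ∧
      T.squareDomain lamT = ({0} : Set (lp (fun _ : V => ℂ) 2)) := by
  have hv₀' : T.HasParent v₀ := hv₀
  have he : ∀ v, v ≠ v₀ → lamT v = lam v := fun v hv => by
    rw [hlamT v, if_neg hv]
  have hdomeq : T.domain lamT = T.domain lam := domain_eq T hv₀' he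
  -- `e_{v₀}` and its shifts
  set e : lp (fun _ : V => ℂ) 2 := lp.single 2 v₀ (1 : ℂ) with he_def
  have hedom : e ∈ T.domain lam := single_mem_domain T hdense v₀
  set s : ℝ := ‖T.shift lam e‖ with hs_def
  have hs0 : 0 ≤ s := norm_nonneg _
  have hlamT_v₀ : lamT v₀ = ((Real.sqrt (1 + s ^ 2) : ℝ) : ℂ) := by
    rw [hlamT v₀, if_pos rfl]
  -- `Λ lamT e = Λ lam e` (children of `v₀` are ≠ `v₀`)
  have hlame : T.Lam lamT ⇑e = T.Lam lam ⇑e := by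
    funext v
    simp only [DirectedTree.Lam]
    by_cases hP : T.HasParent v
    · rw [if_pos hP, if_pos hP]
      by_cases hp : T.par v = v₀
      · have hvne : v ≠ v₀ := by
          intro hveq
          have hedge := edge_par T hP
          rw [hp, hveq] at hedge
          exact T.antisymm v₀ v₀ hedge hedge
        rw [he v hvne]
      · rw [he_def]
        simp [lp.single_apply_ne _ _ _ hp, Pi.single_apply, hp]
    · rw [if_neg hP, if_neg hP]
  have hedomT : e ∈ T.domain lamT := hdomeq ▸ hedom
  have hshift_e : T.shift lamT e = T.shift lam e := by
    apply lp.ext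
    rw [coe_shift T hedomT, coe_shift T hedom, hlame]
  refine ⟨hdomeq ▸ hdense, hdomeq, ?_, ?_, ?_⟩
  · -- adjoint domains are equal
    exact le_antisymm (adj_subset T hv₀' (fun v hv => (he v hv).symm))
      (adj_subset T hv₀' he)
  · -- not hyponormal
    rintro ⟨-, -, hineq⟩
    have hadj : ∀ g ∈ T.domain lamT,
        (inner ℂ (T.shift lamT g) e : ℂ) =
          inner ℂ g (lp.single 2 (T.par v₀) ((starRingEnd ℂ) (lamT v₀))) := by
      intro g hg
      rw [he_def, lp.inner_single_right, lp.inner_single_right]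
      have : (⇑(T.shift lamT g) : V → ℂ) v₀ = lamT v₀ * (g : V → ℂ) (T.par v₀) := by
        rw [coe_shift T hg]
        simp [DirectedTree.Lam, if_pos hv₀']
      rw [this]
      simp only [RCLike.inner_apply, map_mul]
      ring
    have hkey := hineq e hedomT _ hadj
    rw [hshift_e, ← hs_def] at hkey
    have hns : ‖(lp.single 2 (T.par v₀) ((starRingEnd ℂ) (lamT v₀)) :
        lp (fun _ : V => ℂ) 2)‖ = Real.sqrt (1 + s ^ 2) := by
      rw [lp.norm_single (E := fun _ : V => ℂ) (p := 2) (by norm_num) (T.par v₀) ((starRingEnd ℂ) (lamT v₀))]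
      rw [RCLike.norm_conj, hlamT_v₀, Complex.norm_real, Real.norm_eq_abs,
        abs_of_nonneg (Real.sqrt_nonneg _)]
    rw [hns] at hkey
    nlinarith [Real.sq_sqrt (show (0:ℝ) ≤ 1 + s ^ 2 by positivity),
      Real.sqrt_nonneg (1 + s ^ 2)]
  · -- square domain is trivial
    ext f
    simp only [Set.mem_singleton_iff]
    constructor
    · rintro ⟨hf1, hf2⟩
      have hf1' : f ∈ T.domain lam := hdomeq ▸ hf1
      have hf2' : T.shift lamT f ∈ T.domain lam := hdomeq ▸ hf2
      have hsingle : (lp.single 2 v₀ ((lamT v₀ - lam v₀) * (f : V → ℂ) (T.par v₀)) :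
          lp (fun _ : V => ℂ) 2) ∈ T.domain lam := by
        have : (lp.single 2 v₀ ((lamT v₀ - lam v₀) * (f : V → ℂ) (T.par v₀)) :
            lp (fun _ : V => ℂ) 2) =
            ((lamT v₀ - lam v₀) * (f : V → ℂ) (T.par v₀)) • lp.single 2 v₀ (1 : ℂ) := by
          rw [← lp.single_smul]
          norm_num
        rw [this]
        exact domain_smul T _ hedom
      have hsf : T.shift lam f ∈ T.domain lam := by
        have hse := shift_eq_add T hv₀' he hf1'
        have : T.shift lam f = T.shift lamT f -
            lp.single 2 v₀ ((lamT v₀ - lam v₀) * (f : V → ℂ) (T.par v₀)) := by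
          rw [hse]; abel
        rw [this]
        exact domain_sub T hf2' hsingle
      have : f ∈ T.squareDomain lam := ⟨hf1', hsf⟩
      rwa [hsq, Set.mem_singleton_iff] at this
    · rintro rfl
      refine ⟨zero_mem_domain T lamT, ?_⟩
      rw [shift_zero T lamT]
      exact zero_mem_domain T lamT
end
end
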